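/- arXiv:1207.3693 — 2 statements merged into one kernel-verified Lean document; each statement's English description precedes it below -/
import Mathlib

section
/- Let $A_1,\dots,A_k$ be $l\times l$ real matrices with nonnegative entries. Suppose that for every sequence $\bar a=(a_1,a_2,\dots)\in\{1,\dots,k\}^{\mathbb N}$ and every $n\ge 1$ there exists an integer $N\ge 0$ such that the product $A_{a_n}A_{a_{n+1}}\cdots A_{a_{n+N}}$ has all entries strictly positive, and let $N^{\bar a}_n$ denote the least such $N$. Then the set $\{N^{\bar a}_n : n\in\mathbb N,\ \bar a\in\{1,\dots,k\}^{\mathbb N}\}$ is bounded. -/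
open Filter Topology

noncomputable section

/-- Product of matrices `A (a 0) * A (a 1) * ⋯ * A (a (n-1))`,
representing `A_{a_1} A_{a_2} ⋯ A_{a_n}` for the (1-indexed) sequence `ā`. -/
def matSeq {l k : ℕ} {R : Type} [Semiring R] (A : Fin k → Matrix (Fin l) (Fin l) R) :
    (ℕ → Fin k) → ℕ → Matrix (Fin l) (Fin l) R
  | _, 0 => 1
  | a, n + 1 => A (a 0) * matSeq A (fun i => a (i + 1)) n

/-- Product `ω (a 0) * ⋯ * ω (a (n-1))`, representing `ω_{a_1} ⋯ ω_{a_n}`. -/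
def prodSeq {k : ℕ} (ω : Fin k → ℝ) : (ℕ → Fin k) → ℕ → ℝ
  | _, 0 => 1
  | a, n + 1 => ω (a 0) * prodSeq ω (fun i => a (i + 1)) n

open Classical in
/-- The metric on `Σ = {1,…,k}^ℕ`: `d(ā,b̄) = 1/L` where `L` is the least (1-indexed)
position where the sequences differ, and `0` if they are equal. -/
def dSigma {k : ℕ} (a b : ℕ → Fin k) : ℝ :=
  if h : ∃ n, a n ≠ b n then 1 / ((Nat.find h : ℝ) + 1) else 0

/-- The matrix `E^n_ā` with entries `(A^n_ā)_{ij} / (ω^n_ā V_j)`. -/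
def Emat {l k : ℕ} (A : Fin k → Matrix (Fin l) (Fin l) ℝ) (ω : Fin k → ℝ) (V : Fin l → ℝ)
    (a : ℕ → Fin k) (n : ℕ) : Matrix (Fin l) (Fin l) ℝ :=
  fun i j => matSeq A a n i j / (prodSeq ω a n * V j)

/-- The set of columns of `E^n_ā`, as vectors of `ℝ^l`. -/
def Ecols {l k : ℕ} (A : Fin k → Matrix (Fin l) (Fin l) ℝ) (ω : Fin k → ℝ) (V : Fin l → ℝ)
    (a : ℕ → Fin k) (n : ℕ) : Set (EuclideanSpace ℝ (Fin l)) :=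
  {v | ∃ j : Fin l, ∀ i : Fin l, v i = Emat A ω V a n i j}

/-- `Δ^n_ā`, the convex hull in `ℝ^l` of the columns of `E^n_ā`. -/
def DeltaSet {l k : ℕ} (A : Fin k → Matrix (Fin l) (Fin l) ℝ) (ω : Fin k → ℝ) (V : Fin l → ℝ)
    (a : ℕ → Fin k) (n : ℕ) : Set (EuclideanSpace ℝ (Fin l)) :=
  convexHull ℝ (Ecols A ω V a n)

lemma matSeq_congr {l k : ℕ} (A : Fin k → Matrix (Fin l) (Fin l) ℝ) :
    ∀ (n : ℕ) (a b : ℕ → Fin k), (∀ i < n, a i = b i) → matSeq A a n = matSeq A b n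
  | 0, _, _, _ => rfl
  | n+1, a, b, h => by
      show A (a 0) * matSeq A (fun i => a (i+1)) n = A (b 0) * matSeq A (fun i => b (i+1)) n
      rw [h 0 (Nat.succ_pos n), matSeq_congr A n (fun i => a (i+1)) (fun i => b (i+1))
        (fun i hi => h (i+1) (Nat.succ_lt_succ hi))]

lemma matSeq_succ_right {l k : ℕ} (A : Fin k → Matrix (Fin l) (Fin l) ℝ) :
    ∀ (n : ℕ) (a : ℕ → Fin k), matSeq A a (n+1) = matSeq A a n * A (a n)
  | 0, a => by
      show A (a 0) * 1 = 1 * A (a 0)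
      rw [Matrix.mul_one, Matrix.one_mul]
  | n+1, a => by
      show A (a 0) * matSeq A (fun i => a (i+1)) (n+1) = _
      rw [matSeq_succ_right A n, ← Matrix.mul_assoc]
      rfl

lemma matSeq_nonneg {l k : ℕ} (A : Fin k → Matrix (Fin l) (Fin l) ℝ)
    (hA : ∀ i : Fin k, ∀ p q : Fin l, 0 ≤ A i p q) :
    ∀ (n : ℕ) (a : ℕ → Fin k) (p q : Fin l), 0 ≤ matSeq A a n p q
  | 0, a, p, q => by
      show (0:ℝ) ≤ (1 : Matrix (Fin l) (Fin l) ℝ) p q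
      rw [Matrix.one_apply]
      split <;> norm_num
  | n+1, a, p, q => by
      show (0:ℝ) ≤ (A (a 0) * matSeq A (fun i => a (i+1)) n) p q
      rw [Matrix.mul_apply]
      exact Finset.sum_nonneg fun r _ =>
        mul_nonneg (hA _ _ _) (matSeq_nonneg A hA n _ _ _)

lemma matSeq_pos_succ {l k : ℕ} (A : Fin k → Matrix (Fin l) (Fin l) ℝ)
    (hA : ∀ i : Fin k, ∀ p q : Fin l, 0 ≤ A i p q)
    (hcol : ∀ (i : Fin k) (q : Fin l), ∃ p, 0 < A i p q)
    (a : ℕ → Fin k) (n : ℕ)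
    (h : ∀ p q : Fin l, 0 < matSeq A a n p q) :
    ∀ p q : Fin l, 0 < matSeq A a (n+1) p q := by
  intro p q
  rw [matSeq_succ_right, Matrix.mul_apply]
  obtain ⟨r, hr⟩ := hcol (a n) q
  exact Finset.sum_pos'
    (fun s _ => mul_nonneg (matSeq_nonneg A hA n a p s) (hA _ _ _))
    ⟨r, Finset.mem_univ r, mul_pos (h p r) hr⟩

lemma matSeq_pos_mono {l k : ℕ} (A : Fin k → Matrix (Fin l) (Fin l) ℝ)
    (hA : ∀ i : Fin k, ∀ p q : Fin l, 0 ≤ A i p q)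
    (hcol : ∀ (i : Fin k) (q : Fin l), ∃ p, 0 < A i p q)
    (a : ℕ → Fin k) {n m : ℕ} (hnm : n ≤ m)
    (h : ∀ p q : Fin l, 0 < matSeq A a n p q) :
    ∀ p q : Fin l, 0 < matSeq A a m p q := by
  induction m, hnm using Nat.le_induction with
  | base => exact h
  | succ m hm ih => exact matSeq_pos_succ A hA hcol a m ih

/-- A primitive finite set of nonnegative matrices is automatically bounded primitive:
the least `N` witnessing positivity of `A_{a_n} ⋯ A_{a_{n+N}}` is bounded uniformly in
`ā` and `n`. -/
theorem bounded_primitive {l k : ℕ} (hl : 0 < l) (hk : 0 < k)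
    (A : Fin k → Matrix (Fin l) (Fin l) ℝ)
    (hA : ∀ i : Fin k, ∀ p q : Fin l, 0 ≤ A i p q)
    (hprim : ∀ (a : ℕ → Fin k) (n : ℕ),
      ∃ N : ℕ, ∀ p q : Fin l, 0 < matSeq A (fun m => a (n + m)) (N + 1) p q) :
    ∃ B : ℕ, ∀ (a : ℕ → Fin k) (n N : ℕ),
      IsLeast {N' : ℕ | ∀ p q : Fin l, 0 < matSeq A (fun m => a (n + m)) (N' + 1) p q} N →
      N ≤ B := by
  -- every matrix has no zero column
  have hcol : ∀ (i : Fin k) (q : Fin l), ∃ p, 0 < A i p q := by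
    intro i q
    by_contra h
    push_neg at h
    have hz : ∀ p, A i p q = 0 := fun p => le_antisymm (h p) (hA i p q)
    obtain ⟨N, hN⟩ := hprim (fun _ => i) 0
    have hpos := hN ⟨0, hl⟩ q
    rw [matSeq_succ_right] at hpos
    rw [Matrix.mul_apply] at hpos
    have : (∑ r, matSeq A (fun m => (fun _ => i) (0 + m)) N ⟨0, hl⟩ r * A i r q) = 0 :=
      Finset.sum_eq_zero fun r _ => by rw [hz r, mul_zero]
    rw [this] at hpos
    exact lt_irrefl 0 hpos
  by_contra hB
  push_neg at hB
  have key : ∀ B : ℕ, ∃ c : ℕ → Fin k, ¬ ∀ p q : Fin l, 0 < matSeq A c (B+1) p q := by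
    intro B
    obtain ⟨a, n, N, hle, hBN⟩ := hB B
    refine ⟨fun m => a (n + m), fun hpos => ?_⟩
    exact absurd (hle.2 hpos) (not_le.mpr hBN)
  choose c hc using key
  obtain ⟨a, -, φ, hφ, hconv⟩ :=
    isCompact_univ.tendsto_subseq (x := c) (fun n => Set.mem_univ _)
  obtain ⟨N, hN⟩ := hprim a 0
  have hN' : ∀ p q : Fin l, 0 < matSeq A a (N+1) p q := by
    have heq := matSeq_congr A (N+1) (fun m => a (0 + m)) a (fun i _ => by simp)
    intro p q; rw [← heq]; exact hN p q
  -- eventual agreement on each coordinate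
  have hev : ∀ i : ℕ, ∀ᶠ j in atTop, c (φ j) i = a i := by
    intro i
    have h1 : Tendsto (fun j => c (φ j) i) atTop (𝓝 (a i)) := (tendsto_pi_nhds.mp hconv) i
    rw [nhds_discrete] at h1
    exact tendsto_pure.mp h1
  have hev' : ∀ᶠ j in atTop, ∀ i ∈ Finset.range (N+1), c (φ j) i = a i :=
    (Filter.eventually_all_finset _).mpr fun i _ => hev i
  have hge : ∀ᶠ j in atTop, N ≤ φ j :=
    eventually_atTop.mpr ⟨N, fun j hj => hj.trans (hφ.le_apply)⟩
  obtain ⟨j, h1, h2⟩ := (hev'.and hge).exists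
  apply hc (φ j)
  have heq : matSeq A (c (φ j)) (N+1) = matSeq A a (N+1) :=
    matSeq_congr A (N+1) _ _ (fun i hi => h1 i (Finset.mem_range.mpr hi))
  have hpos : ∀ p q : Fin l, 0 < matSeq A (c (φ j)) (N+1) p q := by
    intro p q; rw [heq]; exact hN' p q
  exact matSeq_pos_mono A hA hcol (c (φ j)) (Nat.succ_le_succ h2) hpos


end
end

section
/- Let $\theta'>0$ satisfy $\theta' l<1$ and $\theta' < A_{kj}V_k/V_j$ for every $N$-fold product $A$ of matrices from $\{A_1/\omega_1,\dots,A_k/\omega_k\}$ and all indices $k,j$. Then for every $\bar a\in\Sigma$ and every $n\ge 1$, the set $\Delta^{n+N}_{\bar a}$ is contained in a translate of $(1-\theta' l)\cdot\Delta^{n}_{\bar a}$; in particular $\operatorname{diam}(\Delta^{n+N}_{\bar a})\le (1-\theta' l)\operatorname{diam}(\Delta^{n}_{\bar a})$, and hence $\operatorname{diam}(\Delta^{1+mN}_{\bar a})\le \rho\,(1-\theta' l)^m$ for all $m\ge 0$, where $\rho$ is the maximum of the $k$ possible values of $\operatorname{diam}(\Delta^{1}_{\bar a})$ (which depends only on $a_1$).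 -/
open Filter Topology Pointwise

noncomputable section

lemma matSeq_add {l k : ℕ} {R : Type} [Semiring R] (A : Fin k → Matrix (Fin l) (Fin l) R) :
    ∀ (n : ℕ) (a : ℕ → Fin k) (N : ℕ),
      matSeq A a (n + N) = matSeq A a n * matSeq A (fun i => a (i + n)) N
  | 0, a, N => by simp [matSeq]
  | n + 1, a, N => by
    have h : n + 1 + N = (n + N) + 1 := by ring
    rw [h]
    show A (a 0) * matSeq A (fun i => a (i + 1)) (n + N) = _
    rw [matSeq_add A n (fun i => a (i + 1)) N]
    show _ = A (a 0) * matSeq A (fun i => a (i + 1)) n * matSeq A (fun i => a (i + (n + 1))) N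
    rw [Matrix.mul_assoc]
    rfl

lemma prodSeq_add {k : ℕ} (ω : Fin k → ℝ) :
    ∀ (n : ℕ) (a : ℕ → Fin k) (N : ℕ),
      prodSeq ω a (n + N) = prodSeq ω a n * prodSeq ω (fun i => a (i + n)) N
  | 0, a, N => by simp [prodSeq]
  | n + 1, a, N => by
    have h : n + 1 + N = (n + N) + 1 := by ring
    rw [h]
    show ω (a 0) * prodSeq ω (fun i => a (i + 1)) (n + N) = _
    rw [prodSeq_add ω n (fun i => a (i + 1)) N]
    show _ = ω (a 0) * prodSeq ω (fun i => a (i + 1)) n * prodSeq ω (fun i => a (i + (n + 1))) N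
    rw [mul_assoc]
    rfl

lemma prodSeq_pos {k : ℕ} {ω : Fin k → ℝ} (hω : ∀ i, 0 < ω i) (a : ℕ → Fin k) :
    ∀ n, 0 < prodSeq ω a n := by
  intro n
  induction n generalizing a with
  | zero => simp [prodSeq]
  | succ n ih => exact mul_pos (hω _) (ih _)

lemma matSeq_norm {l k : ℕ} (A : Fin k → Matrix (Fin l) (Fin l) ℝ) (ω : Fin k → ℝ)
    (a : ℕ → Fin k) :
    ∀ n, matSeq (fun i => (ω i)⁻¹ • A i) a n = (prodSeq ω a n)⁻¹ • matSeq A a n := by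
  intro n
  induction n generalizing a with
  | zero => simp [matSeq, prodSeq]
  | succ n ih =>
    show (ω (a 0))⁻¹ • A (a 0) * matSeq (fun i => (ω i)⁻¹ • A i) (fun i => a (i + 1)) n = _
    rw [ih]
    show _ = (ω (a 0) * prodSeq ω (fun i => a (i + 1)) n)⁻¹ •
        (A (a 0) * matSeq A (fun i => a (i + 1)) n)
    rw [Matrix.mul_smul, Matrix.smul_mul, smul_smul, mul_inv]
    rw [mul_comm ((prodSeq ω (fun i => a (i + 1)) n)⁻¹)]

lemma eig_seq {l k : ℕ} (A : Fin k → Matrix (Fin l) (Fin l) ℝ) (ω : Fin k → ℝ) (V : Fin l → ℝ)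
    (heig : ∀ i : Fin k, ∀ j : Fin l, ∑ p, V p * A i p j = ω i * V j) (a : ℕ → Fin k) :
    ∀ n (j : Fin l), ∑ p, V p * matSeq A a n p j = prodSeq ω a n * V j := by
  intro n
  induction n generalizing a with
  | zero => intro j; simp [matSeq, prodSeq, Matrix.one_apply]
  | succ n ih =>
    intro j
    show ∑ p, V p * (A (a 0) * matSeq A (fun i => a (i + 1)) n) p j = _
    simp only [Matrix.mul_apply, Finset.mul_sum]
    rw [Finset.sum_comm]
    calc ∑ q, ∑ p, V p * (A (a 0) p q * matSeq A (fun i => a (i + 1)) n q j)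
        = ∑ q, (∑ p, V p * A (a 0) p q) * matSeq A (fun i => a (i + 1)) n q j := by
          congr 1; funext q; rw [Finset.sum_mul]; congr 1; funext p; ring
      _ = ∑ q, ω (a 0) * (V q * matSeq A (fun i => a (i + 1)) n q j) := by
          congr 1; funext q; rw [heig]; ring
      _ = ω (a 0) * (prodSeq ω (fun i => a (i + 1)) n * V j) := by
          rw [← Finset.mul_sum, ih]
      _ = prodSeq ω a (n + 1) * V j := by
          show _ = ω (a 0) * prodSeq ω (fun i => a (i + 1)) n * V j; ring

lemma euclid_sum_apply {l : ℕ} {ι : Type*} (s : Finset ι) (f : ι → EuclideanSpace ℝ (Fin l))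
    (i : Fin l) : (∑ p ∈ s, f p) i = ∑ p ∈ s, f p i := by
  classical
  induction s using Finset.induction with
  | empty => simp
  | insert x t h ih => rw [Finset.sum_insert h, Finset.sum_insert h, PiLp.add_apply, ih]

lemma Ecols_finite {l k : ℕ} (A : Fin k → Matrix (Fin l) (Fin l) ℝ) (ω : Fin k → ℝ)
    (V : Fin l → ℝ) (a : ℕ → Fin k) (n : ℕ) : (Ecols A ω V a n).Finite := by
  have h : Ecols A ω V a n =
      Set.range (fun j : Fin l => (WithLp.toLp 2 (fun i => Emat A ω V a n i j) : EuclideanSpace ℝ (Fin l))) := by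
    ext u
    constructor
    · rintro ⟨j, hj⟩; exact ⟨j, (PiLp.ext fun i => (hj i).symm)⟩
    · rintro ⟨j, rfl⟩; exact ⟨j, fun i => rfl⟩
  rw [h]; exact Set.finite_range _

lemma DeltaSet_bounded {l k : ℕ} (A : Fin k → Matrix (Fin l) (Fin l) ℝ) (ω : Fin k → ℝ)
    (V : Fin l → ℝ) (a : ℕ → Fin k) (n : ℕ) : Bornology.IsBounded (DeltaSet A ω V a n) :=
  ((Ecols_finite A ω V a n).isCompact_convexHull ℝ).isBounded

lemma delta_step {l k : ℕ}
    (A : Fin k → Matrix (Fin l) (Fin l) ℝ) (ω : Fin k → ℝ) (V : Fin l → ℝ)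
    (hω : ∀ i, 0 < ω i) (hV : ∀ p, 0 < V p)
    (heig : ∀ i : Fin k, ∀ j : Fin l, ∑ p, V p * A i p j = ω i * V j)
    (N : ℕ) (θ' : ℝ) (hθ'pos : 0 < θ') (hθ'l : θ' * l < 1)
    (hθ'small : ∀ (b : ℕ → Fin k) (p q : Fin l),
      θ' < matSeq (fun i => (ω i)⁻¹ • A i) b N p q * V p / V q)
    (a : ℕ → Fin k) (n : ℕ) :
    ∃ v : EuclideanSpace ℝ (Fin l),
      DeltaSet A ω V a (n + N) ⊆ (fun w => v + (1 - θ' * l) • w) '' DeltaSet A ω V a n := by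
  classical
  set b : ℕ → Fin k := fun i => a (i + n) with hb
  set B : Matrix (Fin l) (Fin l) ℝ := matSeq A b N with hB
  set W : ℝ := prodSeq ω b N with hW
  set Pn : ℝ := prodSeq ω a n with hPn
  have hWpos : 0 < W := prodSeq_pos hω b N
  have hPnpos : 0 < Pn := prodSeq_pos hω a n
  have h1lt : 0 < 1 - θ' * l := by linarith
  set c : Fin l → Fin l → ℝ := fun p j => B p j * V p / (W * V j) with hc
  have hcθ : ∀ p j, θ' < c p j := by
    intro p j
    have h := hθ'small b p j
    rw [matSeq_norm A ω b N] at h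
    have : (W⁻¹ • B) p j * V p / V j = c p j := by
      simp only [Matrix.smul_apply, smul_eq_mul, hc]
      field_simp
    rw [← hW, this] at h
    exact h
  have hsum : ∀ j, ∑ p, c p j = 1 := by
    intro j
    have heq := eig_seq A ω V heig b N j
    simp only [hc]
    rw [← Finset.sum_div, div_eq_one_iff_eq (ne_of_gt (mul_pos hWpos (hV j)))]
    calc ∑ x, B x j * V x = ∑ x, V x * matSeq A b N x j := by
          apply Finset.sum_congr rfl; intro x _; rw [hB]; ring
      _ = W * V j := by rw [heq, hW]
  set x : Fin l → EuclideanSpace ℝ (Fin l) :=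
    fun p => WithLp.toLp 2 (fun i => Emat A ω V a n i p) with hx
  set d : Fin l → Fin l → ℝ := fun p j => (c p j - θ') / (1 - θ' * l) with hd
  have hd0 : ∀ p j, 0 ≤ d p j := fun p j =>
    div_nonneg (by linarith [hcθ p j]) h1lt.le
  have hdsum : ∀ j, ∑ p, d p j = 1 := by
    intro j
    simp only [hd]
    rw [← Finset.sum_div, div_eq_one_iff_eq (ne_of_gt h1lt)]
    rw [Finset.sum_sub_distrib, hsum j]
    simp [Finset.card_univ, mul_comm]
  have hcd : ∀ p j, θ' + (1 - θ' * l) * d p j = c p j := by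
    intro p j
    simp only [hd]
    rw [mul_div_cancel₀ _ (ne_of_gt h1lt)]
    ring
  set v : EuclideanSpace ℝ (Fin l) :=
    WithLp.toLp 2 (fun i => θ' * ∑ p, Emat A ω V a n i p) with hv
  have hcol : ∀ (j i : Fin l),
      Emat A ω V a (n + N) i j = ∑ p, c p j * Emat A ω V a n i p := by
    intro j i
    show matSeq A a (n + N) i j / (prodSeq ω a (n + N) * V j) = _
    rw [matSeq_add A n a N, prodSeq_add ω n a N, Matrix.mul_apply, Finset.sum_div]
    apply Finset.sum_congr rfl
    intro p _
    show matSeq A a n i p * B p j / (Pn * W * V j) = c p j * (matSeq A a n i p / (Pn * V p))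
    rw [hc]
    have h1 : V p ≠ 0 := ne_of_gt (hV p)
    have h2 : V j ≠ 0 := ne_of_gt (hV j)
    field_simp
  have key : ∀ (j i : Fin l), Emat A ω V a (n + N) i j =
      v i + (1 - θ' * l) * ∑ p, d p j * Emat A ω V a n i p := by
    intro j i
    rw [hcol j i]
    show _ = θ' * ∑ p, Emat A ω V a n i p + _
    rw [Finset.mul_sum, Finset.mul_sum, ← Finset.sum_add_distrib]
    apply Finset.sum_congr rfl
    intro p _
    rw [← hcd p j]
    ring
  refine ⟨v, ?_⟩
  have hConv : Convex ℝ ((fun w => v + (1 - θ' * l) • w) '' DeltaSet A ω V a n) := by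
    have hE : (fun w : EuclideanSpace ℝ (Fin l) => v + (1 - θ' * l) • w) '' DeltaSet A ω V a n
        = (fun w => v + w) '' ((1 - θ' * l) • DeltaSet A ω V a n) := by
      rw [← Set.image_smul, Set.image_image]
    rw [hE]
    exact ((convex_convexHull ℝ _).smul _).translate v
  apply convexHull_min _ hConv
  rintro u ⟨j, hj⟩
  refine ⟨∑ p, d p j • x p, ?_, ?_⟩
  · exact Convex.sum_mem (convex_convexHull ℝ _) (fun p _ => hd0 p j) (hdsum j)
      (fun p _ => subset_convexHull ℝ _ ⟨p, fun i => rfl⟩)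
  · refine PiLp.ext fun i => ?_
    show v i + ((1 - θ' * l) • (∑ p, d p j • x p)) i = u i
    rw [PiLp.smul_apply, euclid_sum_apply, hj i, key j i]
    simp only [smul_eq_mul]
    congr 1

lemma delta_diam_step {l k : ℕ}
    (A : Fin k → Matrix (Fin l) (Fin l) ℝ) (ω : Fin k → ℝ) (V : Fin l → ℝ)
    (hω : ∀ i, 0 < ω i) (hV : ∀ p, 0 < V p)
    (heig : ∀ i : Fin k, ∀ j : Fin l, ∑ p, V p * A i p j = ω i * V j)
    (N : ℕ) (θ' : ℝ) (hθ'pos : 0 < θ') (hθ'l : θ' * l < 1)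
    (hθ'small : ∀ (b : ℕ → Fin k) (p q : Fin l),
      θ' < matSeq (fun i => (ω i)⁻¹ • A i) b N p q * V p / V q)
    (a : ℕ → Fin k) (n : ℕ) :
    Metric.diam (DeltaSet A ω V a (n + N)) ≤
      (1 - θ' * l) * Metric.diam (DeltaSet A ω V a n) := by
  obtain ⟨v, hsub⟩ := delta_step A ω V hω hV heig N θ' hθ'pos hθ'l hθ'small a n
  have h1 : (0:ℝ) ≤ 1 - θ' * l := by linarith
  apply Metric.diam_le_of_forall_dist_le (mul_nonneg h1 Metric.diam_nonneg)
  intro p hp q hq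
  obtain ⟨w1, hw1, rfl⟩ := hsub hp
  obtain ⟨w2, hw2, rfl⟩ := hsub hq
  show dist (v + (1 - θ' * l) • w1) (v + (1 - θ' * l) • w2) ≤ _
  rw [dist_add_left, dist_smul₀, Real.norm_of_nonneg h1]
  exact mul_le_mul_of_nonneg_left
    (Metric.dist_le_diam_of_mem (DeltaSet_bounded A ω V a n) hw1 hw2) h1

lemma DeltaSet_one {l k : ℕ} (A : Fin k → Matrix (Fin l) (Fin l) ℝ) (ω : Fin k → ℝ)
    (V : Fin l → ℝ) (a : ℕ → Fin k) :
    DeltaSet A ω V a 1 = DeltaSet A ω V (fun _ => a 0) 1 := by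
  have hE : Emat A ω V a 1 = Emat A ω V (fun _ => a 0) 1 := by
    funext i j; simp [Emat, matSeq, prodSeq]
  unfold DeltaSet Ecols
  rw [hE]


/-- Contraction of the nested convex hulls: `Δ^{n+N}_ā` is contained in a translate of
`(1-θ'l)·Δ^n_ā`, the diameters contract by the factor `1-θ'l`, and hence
`diam Δ^{1+mN}_ā ≤ ρ (1-θ'l)^m` with `ρ` the maximum of the `k` possible values of
`diam Δ^1_ā` (which depends only on `a 0`). -/
theorem delta_contraction {l k : ℕ} (hl : 0 < l) (hk : 0 < k)
    (A : Fin k → Matrix (Fin l) (Fin l) ℝ) (ω : Fin k → ℝ) (V : Fin l → ℝ)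
    (hA : ∀ i : Fin k, ∀ p q : Fin l, 0 ≤ A i p q)
    (hω : ∀ i, 0 < ω i) (hV : ∀ p, 0 < V p)
    (heig : ∀ i : Fin k, ∀ j : Fin l, ∑ p, V p * A i p j = ω i * V j)
    (N : ℕ) (hN : 0 < N)
    (hpos : ∀ (b : ℕ → Fin k) (p q : Fin l),
      0 < matSeq (fun i => (ω i)⁻¹ • A i) b N p q)
    (θ' : ℝ) (hθ'pos : 0 < θ') (hθ'l : θ' * l < 1)
    (hθ'small : ∀ (b : ℕ → Fin k) (p q : Fin l),
      θ' < matSeq (fun i => (ω i)⁻¹ • A i) b N p q * V p / V q) :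
    ∀ (a : ℕ → Fin k) (n : ℕ), 1 ≤ n →
      (∃ v : EuclideanSpace ℝ (Fin l),
        DeltaSet A ω V a (n + N) ⊆ (fun w => v + (1 - θ' * l) • w) '' DeltaSet A ω V a n) ∧
      Metric.diam (DeltaSet A ω V a (n + N)) ≤ (1 - θ' * l) * Metric.diam (DeltaSet A ω V a n) ∧
      ∀ m : ℕ, Metric.diam (DeltaSet A ω V a (1 + m * N)) ≤
        (⨆ i : Fin k, Metric.diam (DeltaSet A ω V (fun _ => i) 1)) * (1 - θ' * l) ^ m := by
  intro a n hn
  haveI : Nonempty (Fin k) := ⟨⟨0, hk⟩⟩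
  refine ⟨delta_step A ω V hω hV heig N θ' hθ'pos hθ'l hθ'small a n,
    delta_diam_step A ω V hω hV heig N θ' hθ'pos hθ'l hθ'small a n, ?_⟩
  set ρ := ⨆ i : Fin k, Metric.diam (DeltaSet A ω V (fun _ => i) 1) with hρ
  have hbdd : BddAbove (Set.range fun i : Fin k =>
      Metric.diam (DeltaSet A ω V (fun _ => i) 1)) :=
    Set.Finite.bddAbove (Set.finite_range _)
  have hbase : ∀ a' : ℕ → Fin k, Metric.diam (DeltaSet A ω V a' 1) ≤ ρ := by
    intro a'
    rw [DeltaSet_one A ω V a']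
    exact le_ciSup hbdd (a' 0)
  have h1 : (0:ℝ) ≤ 1 - θ' * l := by linarith
  intro m
  induction m with
  | zero => simpa using hbase a
  | succ m ih =>
    have h : 1 + (m + 1) * N = (1 + m * N) + N := by ring
    rw [h]
    calc Metric.diam (DeltaSet A ω V a ((1 + m * N) + N))
        ≤ (1 - θ' * l) * Metric.diam (DeltaSet A ω V a (1 + m * N)) :=
          delta_diam_step A ω V hω hV heig N θ' hθ'pos hθ'l hθ'small a (1 + m * N)
      _ ≤ (1 - θ' * l) * (ρ * (1 - θ' * l) ^ m) := mul_le_mul_of_nonneg_left ih h1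
      _ = ρ * (1 - θ' * l) ^ (m + 1) := by ring


end
end
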